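/- Let Δ_s be the Pearson–Bellissard Laplace–Beltrami operator on L²(∂B, dμ) defined on characteristic functions by Δ_s χ_γ = −∑_{k=0}^{|γ|−1} (1/G_s(γ_k))·[(μ[γ_k] − μ[γ_{k+1}]) χ_γ − μ[γ](χ_{γ_k} − χ_{γ_{k+1}})]. Then for each finite path γ, the subspace E_γ spanned by the functions (1/μ[γ·e]) χ_{γ·e} − (1/μ[γ·e']) χ_{γ·e'}, over ordered pairs (e,e') of distinct edges extending γ, is an eigenspace of Δ_s with eigenvalue λ_γ = ∑_{k=0}^{|γ|−1} (μ[γ_{k+1}] − μ[γ_k])/G_s(γ_k) − μ[γ]/G_s(γ), and dim E_γ = n_γ − 1 where n_γ is the number of edges extending γ one generation further. -/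

import Mathlib

/-- spectrum of the Pearson–Bellissard Laplace–Beltrami operator
`Δ_s`. Finite paths of the Bratteli diagram form a rooted tree `(P, len, par)`
with one-step extensions `children γ`; `trunc γ k` is the truncation `γ_k`.
`μ γ` is the measure of the cylinder `[γ]`, `G γ = G_s(γ)` the Pearson–
Bellissard normalization, `χ γ` the characteristic function of `[γ]` inside a
space of functions `M`, and `Δ` acts on the `χ γ` by the explicit formula.
Then for every finite path `γ` and any two distinct extensions `a, b` of `γ`,
`(1/μ a)·χ a − (1/μ b)·χ b` is an eigenvector of `Δ` with eigenvalue
`λ_γ = ∑_{k<|γ|} (μ γ_{k+1} − μ γ_k)/G(γ_k) − μ γ/G γ`, and the span `E_γ` of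
all such differences has dimension `n_γ − 1` where `n_γ` is the number of
extensions of `γ`. -/
theorem stmt_9 (P : Type*) (M : Type*) [AddCommGroup M] [Module ℝ M]
    (len : P → ℕ) (par : P → P) (children : P → Finset P)
    (trunc : P → ℕ → P)
    (htrunc : ∀ (γ : P) (k : ℕ), trunc γ k = par^[len γ - k] γ)
    (hchild : ∀ γ c : P, c ∈ children γ → par c = γ ∧ len c = len γ + 1)
    (μ G : P → ℝ) (hμ : ∀ γ, 0 < μ γ) (hG : ∀ γ, 0 < G γ)
    (χ : P → M)
    (hind : ∀ γ : P, LinearIndependent ℝ (fun c : (children γ : Finset P) => χ (c : P)))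
    (Δ : M →ₗ[ℝ] M)
    (hΔ : ∀ γ : P, Δ (χ γ) = -∑ k ∈ Finset.range (len γ),
      (G (trunc γ k))⁻¹ •
        ((μ (trunc γ k) - μ (trunc γ (k + 1))) • χ γ -
          μ γ • (χ (trunc γ k) - χ (trunc γ (k + 1))))) :
    ∀ γ : P,
      (∀ a ∈ children γ, ∀ b ∈ children γ,
        Δ ((μ a)⁻¹ • χ a - (μ b)⁻¹ • χ b) =
          ((∑ k ∈ Finset.range (len γ),
              (μ (trunc γ (k + 1)) - μ (trunc γ k)) / G (trunc γ k)) - μ γ / G γ) •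
            ((μ a)⁻¹ • χ a - (μ b)⁻¹ • χ b)) ∧
      Module.finrank ℝ (Submodule.span ℝ
        {v : M | ∃ a ∈ children γ, ∃ b ∈ children γ,
          a ≠ b ∧ v = (μ a)⁻¹ • χ a - (μ b)⁻¹ • χ b}) =
        (children γ).card - 1 := by
  classical
  intro γ
  constructor
  · -- eigenvalue equation
    intro a ha b hb
    obtain ⟨hpa, hla⟩ := hchild γ a ha
    obtain ⟨hpb, hlb⟩ := hchild γ b hb
    have hγself : trunc γ (len γ) = γ := by
      rw [htrunc, Nat.sub_self, Function.iterate_zero_apply]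
    have htr : ∀ c : P, par c = γ → len c = len γ + 1 →
        ∀ k, k ≤ len γ → trunc c k = trunc γ k := by
      intro c hpc hlc k hk
      rw [htrunc, htrunc, hlc]
      have h1 : len γ + 1 - k = (len γ - k) + 1 := by omega
      rw [h1, Function.iterate_succ_apply, hpc]
    have htop : ∀ c : P, len c = len γ + 1 → trunc c (len γ + 1) = c := by
      intro c hlc
      rw [htrunc, hlc, Nat.sub_self, Function.iterate_zero_apply]
    set A : ℝ := ∑ k ∈ Finset.range (len γ),
      (G (trunc γ k))⁻¹ * (μ (trunc γ k) - μ (trunc γ (k + 1))) with hA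
    set W : M := ∑ k ∈ Finset.range (len γ),
      (G (trunc γ k))⁻¹ • (χ (trunc γ k) - χ (trunc γ (k + 1))) with hW
    have hΔc : ∀ c : P, par c = γ → len c = len γ + 1 →
        Δ (χ c) = -(A • χ c - μ c • W) +
          -((G γ)⁻¹ • ((μ γ - μ c) • χ c - μ c • (χ γ - χ c))) := by
      intro c hpc hlc
      rw [hΔ c, hlc, Finset.sum_range_succ, htr c hpc hlc (len γ) le_rfl, hγself,
        htop c hlc, neg_add]
      congr 1
      rw [neg_inj]
      have step : ∀ k ∈ Finset.range (len γ),
          (G (trunc c k))⁻¹ • ((μ (trunc c k) - μ (trunc c (k + 1))) • χ c -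
            μ c • (χ (trunc c k) - χ (trunc c (k + 1)))) =
          ((G (trunc γ k))⁻¹ * (μ (trunc γ k) - μ (trunc γ (k + 1)))) • χ c -
            μ c • ((G (trunc γ k))⁻¹ • (χ (trunc γ k) - χ (trunc γ (k + 1)))) := by
        intro k hk
        have hk' := Finset.mem_range.mp hk
        rw [htr c hpc hlc k hk'.le, htr c hpc hlc (k + 1) hk']
        module
      rw [Finset.sum_congr rfl step, Finset.sum_sub_distrib, ← Finset.sum_smul,
        ← Finset.smul_sum, ← hA, ← hW]
    have hsum : (∑ k ∈ Finset.range (len γ),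
        (μ (trunc γ (k + 1)) - μ (trunc γ k)) / G (trunc γ k)) = -A := by
      rw [hA, ← Finset.sum_neg_distrib]
      refine Finset.sum_congr rfl fun k _ => ?_
      have h0 : G (trunc γ k) ≠ 0 := (hG _).ne'
      field_simp
      ring
    have ha0 : μ a ≠ 0 := (hμ a).ne'
    have hb0 : μ b ≠ 0 := (hμ b).ne'
    have hG0 : G γ ≠ 0 := (hG γ).ne'
    rw [map_sub, map_smul, map_smul, hΔc a hpa hla, hΔc b hpb hlb, hsum]
    match_scalars
    all_goals field_simp
    all_goals try ring
    all_goals simp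
  · -- dimension of the eigenspace
    by_cases hcard : (children γ).card ≤ 1
    · have hT : {v : M | ∃ a ∈ children γ, ∃ b ∈ children γ,
          a ≠ b ∧ v = (μ a)⁻¹ • χ a - (μ b)⁻¹ • χ b} = (∅ : Set M) := by
        ext v
        simp only [Set.mem_setOf_eq, Set.mem_empty_iff_false, iff_false]
        rintro ⟨a, ha, b, hb, hab, -⟩
        exact absurd (Finset.one_lt_card.mpr ⟨a, ha, b, hb, hab⟩) (by omega)
      rw [hT, Submodule.span_empty, finrank_bot]
      omega
    · push_neg at hcard
      obtain ⟨x, hx, y, hy, hxy⟩ := Finset.one_lt_card.mp hcard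
      -- linear independence of the χ's, reformulated over finsets
      have hχind : ∀ (u : Finset P), u ⊆ children γ → ∀ d : P → ℝ,
          ∑ c ∈ u, d c • χ c = 0 → ∀ c ∈ u, d c = 0 := by
        intro u hu d hsum0 c hcu
        have h2 : ∑ i : (children γ : Finset P),
            (if (i : P) ∈ u then d (i : P) else 0) • χ (i : P) = 0 := by
          rw [Finset.sum_coe_sort (children γ) (fun s => (if s ∈ u then d s else 0) • χ s)]
          calc ∑ s ∈ children γ, (if s ∈ u then d s else 0) • χ s
              = ∑ s ∈ children γ, (if s ∈ u then d s • χ s else 0) := by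
                refine Finset.sum_congr rfl fun s _ => ?_
                split <;> simp
            _ = ∑ s ∈ children γ ∩ u, d s • χ s := Finset.sum_ite_mem _ _ _
            _ = ∑ s ∈ u, d s • χ s := by rw [Finset.inter_eq_right.mpr hu]
            _ = 0 := hsum0
        have h3 := Fintype.linearIndependent_iff.mp (hind γ) _ h2 ⟨c, hu hcu⟩
        simpa [hcu] using h3
      set t : Finset P := (children γ).erase y with ht
      have hyS : y ∈ children γ := hy
      -- linear independence of the difference family
      have hli : LinearIndependent ℝ
          (fun i : (t : Finset P) => (μ (i : P))⁻¹ • χ (i : P) - (μ y)⁻¹ • χ y) := by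
        rw [Fintype.linearIndependent_iff]
        intro c hc i
        set d : P → ℝ := fun p => if h : p ∈ t then c ⟨p, h⟩ else 0 with hd
        have hzero : ∑ p ∈ t, d p • ((μ p)⁻¹ • χ p - (μ y)⁻¹ • χ y) = 0 := by
          rw [← Finset.sum_coe_sort t (fun p => d p • ((μ p)⁻¹ • χ p - (μ y)⁻¹ • χ y)),
            ← hc]
          refine Finset.sum_congr rfl fun j _ => ?_
          have : d (j : P) = c j := by rw [hd]; simp [j.2]
          rw [this]
        set e : P → ℝ := fun p => if p = y then (-(∑ q ∈ t, d q)) * (μ y)⁻¹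
          else d p * (μ p)⁻¹ with he
        have hes : ∑ p ∈ children γ, e p • χ p = 0 := by
          have hins : insert y t = children γ := Finset.insert_erase hyS
          rw [← hins, Finset.sum_insert (Finset.notMem_erase y (children γ))]
          have h1 : ∀ p ∈ t, e p • χ p = (d p * (μ p)⁻¹) • χ p := by
            intro p hp
            rw [he]
            simp [Finset.ne_of_mem_erase hp]
          rw [Finset.sum_congr rfl h1]
          have expand : ∑ p ∈ t, d p • ((μ p)⁻¹ • χ p - (μ y)⁻¹ • χ y) =
              ∑ p ∈ t, (d p * (μ p)⁻¹) • χ p -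
                (∑ p ∈ t, d p) • ((μ y)⁻¹ • χ y) := by
            rw [Finset.sum_smul, ← Finset.sum_sub_distrib]
            exact Finset.sum_congr rfl fun p _ => by module
          rw [expand] at hzero
          have hey : e y = (-∑ q ∈ t, d q) * (μ y)⁻¹ := by rw [he]; simp
          rw [hey]
          rw [sub_eq_zero] at hzero
          rw [hzero]
          module
        have hiS : (i : P) ∈ children γ := Finset.mem_of_mem_erase i.2
        have hei := hχind (children γ) Finset.Subset.rfl e hes (i : P) hiS
        have hiy : (i : P) ≠ y := Finset.ne_of_mem_erase i.2
        rw [he] at hei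
        simp only [if_neg hiy] at hei
        have hdi : d (i : P) = 0 := by
          rcases mul_eq_zero.mp hei with h | h
          · exact h
          · exact absurd h (inv_ne_zero (hμ _).ne')
        rw [hd] at hdi
        simpa [i.2] using hdi
      -- span equality
      have hspan : Submodule.span ℝ {v : M | ∃ a ∈ children γ, ∃ b ∈ children γ,
            a ≠ b ∧ v = (μ a)⁻¹ • χ a - (μ b)⁻¹ • χ b} =
          Submodule.span ℝ (Set.range
            (fun i : (t : Finset P) => (μ (i : P))⁻¹ • χ (i : P) - (μ y)⁻¹ • χ y)) := by
        apply le_antisymm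
        · rw [Submodule.span_le]
          rintro v ⟨a, ha, b, hb, hab, rfl⟩
          simp only [SetLike.mem_coe]
          have hmem : ∀ p ∈ children γ, (μ p)⁻¹ • χ p - (μ y)⁻¹ • χ y ∈
              Submodule.span ℝ (Set.range
                (fun i : (t : Finset P) => (μ (i : P))⁻¹ • χ (i : P) - (μ y)⁻¹ • χ y)) := by
            intro p hp
            by_cases hpy : p = y
            · subst hpy
              simp
            · exact Submodule.subset_span ⟨⟨p, Finset.mem_erase.mpr ⟨hpy, hp⟩⟩, rfl⟩
          have hrw : (μ a)⁻¹ • χ a - (μ b)⁻¹ • χ b =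
              ((μ a)⁻¹ • χ a - (μ y)⁻¹ • χ y) - ((μ b)⁻¹ • χ b - (μ y)⁻¹ • χ y) := by
            abel
          rw [hrw]
          exact Submodule.sub_mem _ (hmem a ha) (hmem b hb)
        · rw [Submodule.span_le]
          rintro v ⟨i, rfl⟩
          exact Submodule.subset_span
            ⟨(i : P), Finset.mem_of_mem_erase i.2, y, hyS, Finset.ne_of_mem_erase i.2, rfl⟩
      rw [hspan, finrank_span_eq_card hli, Fintype.card_coe, ht,
        Finset.card_erase_of_mem hyS]
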